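/- arXiv:0707.2722 — 2 statements merged into one kernel-verified Lean document; each statement's English description precedes it below -/
import Mathlib

section
/- For real numbers ξ₁, ξ₂, ξ₃, ξ₄ with ξ = ξ₁+ξ₂+ξ₃+ξ₄, the algebraic identity-based resonance bound holds: if all |ξᵢ| are comparable (say |ξᵢ| ≥ 0.99·max|ξⱼ| for all i) and at least three of the ξᵢ have the same sign, then |ξ³ - (ξ₁³+ξ₂³+ξ₃³+ξ₄³)| ≳ max(|ξ₁|³,|ξ₂|³,|ξ₃|³,|ξ₄|³), with an absolute implied constant. -/
private lemma key_pos (M a b c d : ℝ) (hM : 0 < M)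
    (ha : 0.99 * M ≤ a) (ha' : a ≤ M)
    (hb : 0.99 * M ≤ b) (hb' : b ≤ M)
    (hc : 0.99 * M ≤ c) (hc' : c ≤ M)
    (hd : 0.99 * M ≤ |d|) (hd' : |d| ≤ M) :
    M ^ 3 ≤ |(a + b + c + d) ^ 3 - (a ^ 3 + b ^ 3 + c ^ 3 + d ^ 3)| := by
  have h1 : M ^ 3 ≤ (a + b + c + d) ^ 3 - (a ^ 3 + b ^ 3 + c ^ 3 + d ^ 3) := by
    rcases le_or_gt 0 d with hd0 | hd0
    · have hd1 : 0.99 * M ≤ d := by rwa [abs_of_nonneg hd0] at hd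
      have hd2 : d ≤ M := by rwa [abs_of_nonneg hd0] at hd'
      have hs : 3.96 * M ≤ a + b + c + d := by linarith
      have hs3 : (3.96 * M) ^ 3 ≤ (a + b + c + d) ^ 3 :=
        pow_le_pow_left₀ (by positivity) hs 3
      have hA : a ^ 3 ≤ M ^ 3 := pow_le_pow_left₀ (by linarith) ha' 3
      have hB : b ^ 3 ≤ M ^ 3 := pow_le_pow_left₀ (by linarith) hb' 3
      have hC : c ^ 3 ≤ M ^ 3 := pow_le_pow_left₀ (by linarith) hc' 3
      have hD : d ^ 3 ≤ M ^ 3 := pow_le_pow_left₀ hd0 hd2 3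
      nlinarith [pow_pos hM 3]
    · have hd1 : d ≤ -(0.99 * M) := by
        rw [abs_of_neg hd0] at hd; linarith
      have hd2 : -M ≤ d := by
        rw [abs_of_neg hd0] at hd'; linarith
      have hs : 1.97 * M ≤ a + b + c + d := by linarith
      have hs3 : (1.97 * M) ^ 3 ≤ (a + b + c + d) ^ 3 := by
        apply pow_le_pow_left₀ (by positivity) hs
      have hA : a ^ 3 ≤ M ^ 3 := pow_le_pow_left₀ (by linarith) ha' 3
      have hB : b ^ 3 ≤ M ^ 3 := pow_le_pow_left₀ (by linarith) hb' 3
      have hC : c ^ 3 ≤ M ^ 3 := pow_le_pow_left₀ (by linarith) hc' 3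
      have hD : d ^ 3 ≤ 0 := by nlinarith [sq_nonneg d]
      nlinarith [pow_pos hM 3]
  calc M ^ 3 ≤ (a + b + c + d) ^ 3 - (a ^ 3 + b ^ 3 + c ^ 3 + d ^ 3) := h1
    _ ≤ |(a + b + c + d) ^ 3 - (a ^ 3 + b ^ 3 + c ^ 3 + d ^ 3)| := le_abs_self _

private lemma key (M a b c d : ℝ) (hM : 0 < M)
    (ha : 0.99 * M ≤ |a|) (ha' : |a| ≤ M)
    (hb : 0.99 * M ≤ |b|) (hb' : |b| ≤ M)
    (hc : 0.99 * M ≤ |c|) (hc' : |c| ≤ M)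
    (hd : 0.99 * M ≤ |d|) (hd' : |d| ≤ M)
    (htr : (0 < a ∧ 0 < b ∧ 0 < c) ∨ (a < 0 ∧ b < 0 ∧ c < 0)) :
    M ^ 3 ≤ |(a + b + c + d) ^ 3 - (a ^ 3 + b ^ 3 + c ^ 3 + d ^ 3)| := by
  rcases htr with ⟨h1, h2, h3⟩ | ⟨h1, h2, h3⟩
  · rw [abs_of_pos h1] at ha ha'
    rw [abs_of_pos h2] at hb hb'
    rw [abs_of_pos h3] at hc hc'
    exact key_pos M a b c d hM ha ha' hb hb' hc hc' hd hd'
  · have := key_pos M (-a) (-b) (-c) (-d) hM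
      (by rwa [abs_of_neg h1] at ha) (by rwa [abs_of_neg h1] at ha')
      (by rwa [abs_of_neg h2] at hb) (by rwa [abs_of_neg h2] at hb')
      (by rwa [abs_of_neg h3] at hc) (by rwa [abs_of_neg h3] at hc')
      (by rwa [abs_neg]) (by rwa [abs_neg])
    calc M ^ 3 ≤ |(-a + -b + -c + -d) ^ 3 - ((-a) ^ 3 + (-b) ^ 3 + (-c) ^ 3 + (-d) ^ 3)| := this
      _ = |(a + b + c + d) ^ 3 - (a ^ 3 + b ^ 3 + c ^ 3 + d ^ 3)| := by
          rw [← abs_neg]; ring_nf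

/-- Resonance bound in region C: if all four frequencies are comparable
(each `|ξᵢ| ≥ 0.99 · max |ξⱼ|`) and at least three of them have the same sign,
then `|ξ³ - Σ ξᵢ³| ≳ max |ξᵢ|³` with an absolute constant. -/
theorem resonance_bound_regionC :
    ∃ c : ℝ, 0 < c ∧
      ∀ ξ₁ ξ₂ ξ₃ ξ₄ : ℝ,
        (∀ i ∈ ({ξ₁, ξ₂, ξ₃, ξ₄} : Finset ℝ),
          0.99 * max (max |ξ₁| |ξ₂|) (max |ξ₃| |ξ₄|) ≤ |i|) →
        ((0 < ξ₁ ∧ 0 < ξ₂ ∧ 0 < ξ₃) ∨ (0 < ξ₁ ∧ 0 < ξ₂ ∧ 0 < ξ₄) ∨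
         (0 < ξ₁ ∧ 0 < ξ₃ ∧ 0 < ξ₄) ∨ (0 < ξ₂ ∧ 0 < ξ₃ ∧ 0 < ξ₄) ∨
         (ξ₁ < 0 ∧ ξ₂ < 0 ∧ ξ₃ < 0) ∨ (ξ₁ < 0 ∧ ξ₂ < 0 ∧ ξ₄ < 0) ∨
         (ξ₁ < 0 ∧ ξ₃ < 0 ∧ ξ₄ < 0) ∨ (ξ₂ < 0 ∧ ξ₃ < 0 ∧ ξ₄ < 0)) →
        c * (max (max |ξ₁| |ξ₂|) (max |ξ₃| |ξ₄|))^3 ≤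
          |(ξ₁ + ξ₂ + ξ₃ + ξ₄)^3 - (ξ₁^3 + ξ₂^3 + ξ₃^3 + ξ₄^3)| := by
  refine ⟨1, one_pos, ?_⟩
  intro ξ₁ ξ₂ ξ₃ ξ₄ hcomp hsgn
  set M := max (max |ξ₁| |ξ₂|) (max |ξ₃| |ξ₄|) with hMdef
  have h1 : 0.99 * M ≤ |ξ₁| := hcomp ξ₁ (by simp)
  have h2 : 0.99 * M ≤ |ξ₂| := hcomp ξ₂ (by simp)
  have h3 : 0.99 * M ≤ |ξ₃| := hcomp ξ₃ (by simp)
  have h4 : 0.99 * M ≤ |ξ₄| := hcomp ξ₄ (by simp)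
  have h1' : |ξ₁| ≤ M := le_max_of_le_left (le_max_left _ _)
  have h2' : |ξ₂| ≤ M := le_max_of_le_left (le_max_right _ _)
  have h3' : |ξ₃| ≤ M := le_max_of_le_right (le_max_left _ _)
  have h4' : |ξ₄| ≤ M := le_max_of_le_right (le_max_right _ _)
  have hM : 0 < M := by
    rcases hsgn with ⟨h, _, _⟩ | ⟨h, _, _⟩ | ⟨h, _, _⟩ | ⟨h, _, _⟩ |
      ⟨h, _, _⟩ | ⟨h, _, _⟩ | ⟨h, _, _⟩ | ⟨h, _, _⟩ <;>
      [exact lt_of_lt_of_le (abs_pos.mpr (ne_of_gt h)) h1';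
       exact lt_of_lt_of_le (abs_pos.mpr (ne_of_gt h)) h1';
       exact lt_of_lt_of_le (abs_pos.mpr (ne_of_gt h)) h1';
       exact lt_of_lt_of_le (abs_pos.mpr (ne_of_gt h)) h2';
       exact lt_of_lt_of_le (abs_pos.mpr (ne_of_lt h)) h1';
       exact lt_of_lt_of_le (abs_pos.mpr (ne_of_lt h)) h1';
       exact lt_of_lt_of_le (abs_pos.mpr (ne_of_lt h)) h1';
       exact lt_of_lt_of_le (abs_pos.mpr (ne_of_lt h)) h2']
  rw [one_mul]
  rcases hsgn with h | h | h | h | h | h | h | h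
  · exact key M ξ₁ ξ₂ ξ₃ ξ₄ hM h1 h1' h2 h2' h3 h3' h4 h4' (Or.inl h)
  · have := key M ξ₁ ξ₂ ξ₄ ξ₃ hM h1 h1' h2 h2' h4 h4' h3 h3' (Or.inl h)
    calc M ^ 3 ≤ |(ξ₁ + ξ₂ + ξ₄ + ξ₃) ^ 3 - (ξ₁ ^ 3 + ξ₂ ^ 3 + ξ₄ ^ 3 + ξ₃ ^ 3)| := this
      _ = _ := by ring_nf
  · have := key M ξ₁ ξ₃ ξ₄ ξ₂ hM h1 h1' h3 h3' h4 h4' h2 h2' (Or.inl h)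
    calc M ^ 3 ≤ |(ξ₁ + ξ₃ + ξ₄ + ξ₂) ^ 3 - (ξ₁ ^ 3 + ξ₃ ^ 3 + ξ₄ ^ 3 + ξ₂ ^ 3)| := this
      _ = _ := by ring_nf
  · have := key M ξ₂ ξ₃ ξ₄ ξ₁ hM h2 h2' h3 h3' h4 h4' h1 h1' (Or.inl h)
    calc M ^ 3 ≤ |(ξ₂ + ξ₃ + ξ₄ + ξ₁) ^ 3 - (ξ₂ ^ 3 + ξ₃ ^ 3 + ξ₄ ^ 3 + ξ₁ ^ 3)| := this
      _ = _ := by ring_nf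
  · exact key M ξ₁ ξ₂ ξ₃ ξ₄ hM h1 h1' h2 h2' h3 h3' h4 h4' (Or.inr h)
  · have := key M ξ₁ ξ₂ ξ₄ ξ₃ hM h1 h1' h2 h2' h4 h4' h3 h3' (Or.inr h)
    calc M ^ 3 ≤ |(ξ₁ + ξ₂ + ξ₄ + ξ₃) ^ 3 - (ξ₁ ^ 3 + ξ₂ ^ 3 + ξ₄ ^ 3 + ξ₃ ^ 3)| := this
      _ = _ := by ring_nf
  · have := key M ξ₁ ξ₃ ξ₄ ξ₂ hM h1 h1' h3 h3' h4 h4' h2 h2' (Or.inr h)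
    calc M ^ 3 ≤ |(ξ₁ + ξ₃ + ξ₄ + ξ₂) ^ 3 - (ξ₁ ^ 3 + ξ₃ ^ 3 + ξ₄ ^ 3 + ξ₂ ^ 3)| := this
      _ = _ := by ring_nf
  · have := key M ξ₂ ξ₃ ξ₄ ξ₁ hM h2 h2' h3 h3' h4 h4' h1 h1' (Or.inr h)
    calc M ^ 3 ≤ |(ξ₂ + ξ₃ + ξ₄ + ξ₁) ^ 3 - (ξ₂ ^ 3 + ξ₃ ^ 3 + ξ₄ ^ 3 + ξ₁ ^ 3)| := this
      _ = _ := by ring_nf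
end

section
/- For real numbers ξ₁,…,ξ₄ with max_i|ξᵢ| ≥ 1, and either (i) min_i|ξᵢ| ≤ 0.99·max_i|ξᵢ|, or (ii) min_i|ξᵢ| > 0.99·max_i|ξᵢ| and exactly two of the ξᵢ are positive, there exists a pair of indices j ≠ k such that |ξ₁+ξ₂+ξ₃+ξ₄| ≲ |ξⱼ+ξ_k| and |ξⱼ - ξ_k| ≳ max_i|ξᵢ|, with absolute implicit constants. Consequently, writing ξ = ∑ξᵢ, |ξ| ≲ |ξ|^{1/2}|ξⱼ+ξ_k|^{1/2}|ξⱼ-ξ_k|^{1/2} ∏_{i=1}^4 ⟨ξᵢ⟩^{sᵢ} whenever sᵢ ≤ 0 and ∑sᵢ = -1/2. -/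
open Finset

/-- The conclusion of the region-B pair selection, with `C = 400`, `c = 1/100`. -/
abbrev RegionBConcl (ξ : Fin 4 → ℝ) (M : ℝ) : Prop :=
  ∃ j k : Fin 4, j ≠ k ∧
    |∑ i, ξ i| ≤ 400 * |ξ j + ξ k| ∧
    (1/100 : ℝ) * M ≤ |ξ j - ξ k| ∧
    ∀ s : Fin 4 → ℝ, (∀ i, s i ≤ 0) → (∑ i, s i) = -1/2 →
      |∑ i, ξ i| ≤ 400 * |∑ i, ξ i| ^ ((1:ℝ)/2) * |ξ j + ξ k| ^ ((1:ℝ)/2) *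
        |ξ j - ξ k| ^ ((1:ℝ)/2) * ∏ i, (1 + (ξ i)^2) ^ (s i / 2)

private lemma prod_weight_bound (ξ : Fin 4 → ℝ) (M : ℝ) (hM : 1 ≤ M)
    (hb : ∀ i, |ξ i| ≤ M) (s : Fin 4 → ℝ) (hs : ∀ i, s i ≤ 0)
    (hsum : (∑ i, s i) = -1/2) :
    (2 * M ^ 2) ^ ((-1:ℝ)/4) ≤ ∏ i, (1 + (ξ i)^2) ^ (s i / 2) := by
  have hM0 : (0:ℝ) < M := lt_of_lt_of_le one_pos hM
  have h2M : (0:ℝ) < 2 * M ^ 2 := by positivity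
  have key : ∀ i, (2 * M ^ 2) ^ (s i / 2) ≤ (1 + (ξ i)^2) ^ (s i / 2) := by
    intro i
    apply Real.rpow_le_rpow_of_nonpos (by positivity)
    · have h := hb i
      have h0 := abs_nonneg (ξ i)
      nlinarith [sq_abs (ξ i)]
    · linarith [hs i]
  calc (2 * M ^ 2) ^ ((-1:ℝ)/4)
      = (2 * M ^ 2) ^ ((∑ i, s i) / 2) := by rw [hsum]; norm_num
    _ = ∏ i, (2 * M ^ 2) ^ (s i / 2) := by
        rw [show (∑ i, s i)/2 = ∑ i, s i / 2 from Finset.sum_div _ _ _,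
          Real.rpow_sum_of_pos h2M]
    _ ≤ ∏ i, (1 + (ξ i)^2) ^ (s i / 2) :=
        Finset.prod_le_prod (fun i _ => (Real.rpow_pos_of_pos h2M _).le)
          (fun i _ => key i)

private lemma final_ineq (ξ : Fin 4 → ℝ) (M : ℝ) (hM : 1 ≤ M)
    (hb : ∀ i, |ξ i| ≤ M) (j k : Fin 4)
    (h1 : |∑ i, ξ i| ≤ 400 * |ξ j + ξ k|)
    (h2 : (1/100 : ℝ) * M ≤ |ξ j - ξ k|) :
    ∀ s : Fin 4 → ℝ, (∀ i, s i ≤ 0) → (∑ i, s i) = -1/2 →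
      |∑ i, ξ i| ≤ 400 * |∑ i, ξ i| ^ ((1:ℝ)/2) * |ξ j + ξ k| ^ ((1:ℝ)/2) *
        |ξ j - ξ k| ^ ((1:ℝ)/2) * ∏ i, (1 + (ξ i)^2) ^ (s i / 2) := by
  intro s hs hsum
  have hM0 : (0:ℝ) < M := lt_of_lt_of_le one_pos hM
  set S := |∑ i, ξ i| with hSdef
  set a := |ξ j + ξ k| with hadef
  set d := |ξ j - ξ k| with hddef
  have hS0 : 0 ≤ S := abs_nonneg _
  have ha0 : 0 ≤ a := abs_nonneg _
  have hd0 : 0 ≤ d := abs_nonneg _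
  set t := (2 * M ^ 2) ^ ((-1:ℝ)/4) with htdef
  have h2M : (0:ℝ) < 2 * M ^ 2 := by positivity
  have ht0 : 0 < t := Real.rpow_pos_of_pos h2M _
  have hP : t ≤ ∏ i, (1 + (ξ i)^2) ^ (s i / 2) :=
    prod_weight_bound ξ M hM hb s hs hsum
  -- t ^ 4 * (2 * M ^ 2) = 1
  have ht4 : t ^ (4:ℕ) * (2 * M ^ 2) = 1 := by
    have : t ^ (4:ℕ) = (2 * M ^ 2) ^ (((-1:ℝ)/4) * (4:ℕ)) := by
      rw [htdef, ← Real.rpow_natCast ((2*M^2) ^ ((-1:ℝ)/4)) 4, ← Real.rpow_mul h2M.le]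
    rw [this]
    push_cast
    rw [show ((-1:ℝ)/4) * 4 = -1 by norm_num, Real.rpow_neg_one]
    field_simp
  set u := Real.sqrt M with hudef
  have hu2 : u ^ 2 = M := Real.sq_sqrt hM0.le
  have hu1 : (1:ℝ) ≤ u := by
    rw [hudef, show (1:ℝ) = Real.sqrt 1 by simp]
    exact Real.sqrt_le_sqrt hM
  have hu0 : 0 < u := lt_of_lt_of_le one_pos hu1
  -- 1 ≤ 2 * u * t
  have h12 : (1:ℝ) ≤ 2 * u * t := by
    have hr0 : 0 < u * t := mul_pos hu0 ht0
    have hr4 : (u * t) ^ (4:ℕ) * 2 = 1 := by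
      have : (u * t) ^ (4:ℕ) * 2 = t ^ (4:ℕ) * (2 * (u^2)^2) := by ring
      rw [this, hu2, ht4]
    by_contra hcon
    push_neg at hcon
    have hlt : u * t < 1/2 := by linarith
    have : (u * t) ^ (4:ℕ) ≤ (1/2 : ℝ) ^ (4:ℕ) :=
      pow_le_pow_left₀ hr0.le hlt.le 4
    nlinarith
  have hSS : Real.sqrt S * Real.sqrt S = S := Real.mul_self_sqrt hS0
  have h400 : Real.sqrt (S / 400) = Real.sqrt S / 20 := by
    rw [show (400:ℝ) = 20 ^ 2 by norm_num, Real.sqrt_div hS0, Real.sqrt_sq (by norm_num : (0:ℝ) ≤ 20)]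
  have h100 : Real.sqrt (M / 100) = Real.sqrt M / 10 := by
    rw [show (100:ℝ) = 10 ^ 2 by norm_num, Real.sqrt_div hM0.le, Real.sqrt_sq (by norm_num : (0:ℝ) ≤ 10)]
  have key : S ≤ 400 * Real.sqrt S * (Real.sqrt S / 20) * (Real.sqrt M / 10) * t := by
    have heq : 400 * Real.sqrt S * (Real.sqrt S / 20) * (Real.sqrt M / 10) * t
        = (Real.sqrt S * Real.sqrt S) * (2 * u * t) := by rw [hudef]; ring
    rw [heq, hSS]
    nlinarith [mul_le_mul_of_nonneg_left h12 hS0]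
  have hmono : 400 * Real.sqrt S * Real.sqrt (S/400) * Real.sqrt (M/100) * t
      ≤ 400 * Real.sqrt S * Real.sqrt a * Real.sqrt d *
        ∏ i, (1 + (ξ i)^2) ^ (s i / 2) := by
    have hsa : Real.sqrt (S/400) ≤ Real.sqrt a :=
      Real.sqrt_le_sqrt (by linarith)
    have hsd : Real.sqrt (M/100) ≤ Real.sqrt d :=
      Real.sqrt_le_sqrt (by linarith)
    have h1' : (0:ℝ) ≤ 400 * Real.sqrt S := by positivity
    gcongr
  calc S ≤ 400 * Real.sqrt S * (Real.sqrt S / 20) * (Real.sqrt M / 10) * t := key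
    _ = 400 * Real.sqrt S * Real.sqrt (S/400) * Real.sqrt (M/100) * t := by
        rw [h400, h100]
    _ ≤ 400 * Real.sqrt S * Real.sqrt a * Real.sqrt d *
        ∏ i, (1 + (ξ i)^2) ^ (s i / 2) := hmono
    _ = 400 * S ^ ((1:ℝ)/2) * a ^ ((1:ℝ)/2) * d ^ ((1:ℝ)/2) *
        ∏ i, (1 + (ξ i)^2) ^ (s i / 2) := by
        rw [Real.sqrt_eq_rpow, Real.sqrt_eq_rpow, Real.sqrt_eq_rpow]

private lemma mk_pair (ξ : Fin 4 → ℝ) (M : ℝ) (hM : 1 ≤ M) (hb : ∀ i, |ξ i| ≤ M)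
    (j k : Fin 4) (hjk : j ≠ k) (h1 : |∑ i, ξ i| ≤ 400 * |ξ j + ξ k|)
    (h2 : (1/100 : ℝ) * M ≤ |ξ j - ξ k|) : RegionBConcl ξ M :=
  ⟨j, k, hjk, h1, h2, final_ineq ξ M hM hb j k h1 h2⟩

private lemma case1 (ξ : Fin 4 → ℝ) (M : ℝ) (hM : 1 ≤ M) (hb : ∀ i, |ξ i| ≤ M)
    (j k : Fin 4) (hj : M = |ξ j|) (hk : |ξ k| ≤ 0.99 * M) : RegionBConcl ξ M := by
  have hM0 : (0:ℝ) < M := lt_of_lt_of_le one_pos hM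
  have h99 : (0.99:ℝ) = 99/100 := by norm_num
  rw [h99] at hk
  have hjk : j ≠ k := by
    intro h
    rw [h] at hj
    rw [← hj] at hk
    linarith
  have hsub : |ξ j| - |ξ k| ≤ |ξ j - ξ k| := abs_sub_abs_le_abs_sub _ _
  have hadd : |ξ j| - |ξ k| ≤ |ξ j + ξ k| := by
    have := abs_sub_abs_le_abs_sub (ξ j) (-ξ k)
    simpa using this
  have hS4 : |∑ i, ξ i| ≤ 4 * M := by
    rw [Fin.sum_univ_four]
    calc |ξ 0 + ξ 1 + ξ 2 + ξ 3| ≤ |ξ 0| + |ξ 1| + |ξ 2| + |ξ 3| := by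
          calc |ξ 0 + ξ 1 + ξ 2 + ξ 3| ≤ |ξ 0 + ξ 1 + ξ 2| + |ξ 3| := abs_add_le _ _
            _ ≤ (|ξ 0 + ξ 1| + |ξ 2|) + |ξ 3| := by linarith [abs_add_le (ξ 0 + ξ 1) (ξ 2)]
            _ ≤ ((|ξ 0| + |ξ 1|) + |ξ 2|) + |ξ 3| := by linarith [abs_add_le (ξ 0) (ξ 1)]
            _ = |ξ 0| + |ξ 1| + |ξ 2| + |ξ 3| := by ring
      _ ≤ 4 * M := by linarith [hb 0, hb 1, hb 2, hb 3]
  apply mk_pair ξ M hM hb j k hjk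
  · -- |S| ≤ 400 * |ξ j + ξ k|
    have : M / 100 ≤ |ξ j + ξ k| := by linarith
    linarith
  · linarith

private lemma case2pair (ξ : Fin 4 → ℝ) (M : ℝ) (hM : 1 ≤ M) (hb : ∀ i, |ξ i| ≤ M)
    (hlow : ∀ i, 0.99 * M < |ξ i|)
    (j k : Fin 4) (hjk : j ≠ k) (hp : 0 < ξ j) (hn : ¬ 0 < ξ k)
    (hhalf : |∑ i, ξ i| ≤ 2 * |ξ j + ξ k|) : RegionBConcl ξ M := by
  have hM0 : (0:ℝ) < M := lt_of_lt_of_le one_pos hM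
  have h99 : (0.99:ℝ) = 99/100 := by norm_num
  have hjpos : 99/100 * M < ξ j := by
    have := hlow j
    rw [h99] at this
    rwa [abs_of_pos hp] at this
  have hkneg : ξ k < -(99/100 * M) := by
    have h := hlow k
    rw [h99] at h
    push_neg at hn
    rw [abs_of_nonpos hn] at h
    linarith
  apply mk_pair ξ M hM hb j k hjk
  · have := abs_nonneg (ξ j + ξ k)
    linarith
  · have : ξ j - ξ k ≤ |ξ j - ξ k| := le_abs_self _
    linarith

private lemma case2split (ξ : Fin 4 → ℝ) (M : ℝ) (hM : 1 ≤ M) (hb : ∀ i, |ξ i| ≤ M)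
    (hlow : ∀ i, 0.99 * M < |ξ i|)
    (p₁ n₁ p₂ n₂ : Fin 4) (h₁ : p₁ ≠ n₁) (h₂ : p₂ ≠ n₂)
    (hp₁ : 0 < ξ p₁) (hp₂ : 0 < ξ p₂) (hn₁ : ¬ 0 < ξ n₁) (hn₂ : ¬ 0 < ξ n₂)
    (hsum : (∑ i, ξ i) = (ξ p₁ + ξ n₁) + (ξ p₂ + ξ n₂)) : RegionBConcl ξ M := by
  have habs : |∑ i, ξ i| ≤ |ξ p₁ + ξ n₁| + |ξ p₂ + ξ n₂| := by
    rw [hsum]; exact abs_add_le _ _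
  rcases le_total |ξ p₁ + ξ n₁| |ξ p₂ + ξ n₂| with hc | hc
  · exact case2pair ξ M hM hb hlow p₂ n₂ h₂ hp₂ hn₂ (by linarith)
  · exact case2pair ξ M hM hb hlow p₁ n₁ h₁ hp₁ hn₁ (by linarith)

/-- Region-B combinatorial estimate: if `max_i |ξᵢ| ≥ 1` and either
(i) `min_i |ξᵢ| ≤ 0.99 max_i |ξᵢ|`, or (ii) `min_i |ξᵢ| > 0.99 max_i |ξᵢ|`
and exactly two of the `ξᵢ` are positive, then there are indices `j ≠ k` with
`|Σξᵢ| ≲ |ξⱼ+ξₖ|` and `|ξⱼ-ξₖ| ≳ max_i |ξᵢ|` (absolute constants);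
consequently `|ξ| ≤ C |ξ|^{1/2} |ξⱼ+ξₖ|^{1/2} |ξⱼ-ξₖ|^{1/2} ∏ ⟨ξᵢ⟩^{sᵢ}`
whenever `sᵢ ≤ 0` and `Σ sᵢ = -1/2`. -/
theorem regionB_pair_selection :
    ∃ C c : ℝ, 0 < C ∧ 0 < c ∧
      ∀ ξ : Fin 4 → ℝ, ∀ M : ℝ,
        M = max (max |ξ 0| |ξ 1|) (max |ξ 2| |ξ 3|) →
        1 ≤ M →
        (min (min |ξ 0| |ξ 1|) (min |ξ 2| |ξ 3|) ≤ 0.99 * M ∨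
         (0.99 * M < min (min |ξ 0| |ξ 1|) (min |ξ 2| |ξ 3|) ∧
          (univ.filter (fun i => 0 < ξ i)).card = 2)) →
        ∃ j k : Fin 4, j ≠ k ∧
          |∑ i, ξ i| ≤ C * |ξ j + ξ k| ∧
          c * M ≤ |ξ j - ξ k| ∧
          ∀ s : Fin 4 → ℝ, (∀ i, s i ≤ 0) → (∑ i, s i) = -1/2 →
            |∑ i, ξ i| ≤ C * |∑ i, ξ i| ^ ((1:ℝ)/2) * |ξ j + ξ k| ^ ((1:ℝ)/2) *
              |ξ j - ξ k| ^ ((1:ℝ)/2) * ∏ i, (1 + (ξ i)^2) ^ (s i / 2) := by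
  refine ⟨400, 1/100, by norm_num, by norm_num, ?_⟩
  intro ξ M hMdef hM hcase
  have hb : ∀ i, |ξ i| ≤ M := by
    intro i
    rw [hMdef]
    fin_cases i <;> simp [le_max_iff, le_refl]
  have h4 : M = |ξ 0| ∨ M = |ξ 1| ∨ M = |ξ 2| ∨ M = |ξ 3| := by
    rw [hMdef]
    rcases max_choice (max |ξ 0| |ξ 1|) (max |ξ 2| |ξ 3|) with h | h <;> rw [h]
    · rcases max_choice |ξ 0| |ξ 1| with h' | h' <;> rw [h'] <;> tauto
    · rcases max_choice |ξ 2| |ξ 3| with h' | h' <;> rw [h'] <;> tauto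
  rcases hcase with hmin | ⟨hmin, hcard⟩
  · -- case (i)
    have h4m : min (min |ξ 0| |ξ 1|) (min |ξ 2| |ξ 3|) = |ξ 0| ∨
        min (min |ξ 0| |ξ 1|) (min |ξ 2| |ξ 3|) = |ξ 1| ∨
        min (min |ξ 0| |ξ 1|) (min |ξ 2| |ξ 3|) = |ξ 2| ∨
        min (min |ξ 0| |ξ 1|) (min |ξ 2| |ξ 3|) = |ξ 3| := by
      rcases min_choice (min |ξ 0| |ξ 1|) (min |ξ 2| |ξ 3|) with h | h <;> rw [h]
      · rcases min_choice |ξ 0| |ξ 1| with h' | h' <;> rw [h'] <;> tauto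
      · rcases min_choice |ξ 2| |ξ 3| with h' | h' <;> rw [h'] <;> tauto
    have hk : ∃ k : Fin 4, |ξ k| ≤ 0.99 * M := by
      rcases h4m with h | h | h | h <;> rw [h] at hmin
      exacts [⟨0, hmin⟩, ⟨1, hmin⟩, ⟨2, hmin⟩, ⟨3, hmin⟩]
    obtain ⟨k, hk⟩ := hk
    rcases h4 with h | h | h | h
    exacts [case1 ξ M hM hb 0 k h hk, case1 ξ M hM hb 1 k h hk,
      case1 ξ M hM hb 2 k h hk, case1 ξ M hM hb 3 k h hk]
  · -- case (ii)
    have hlow : ∀ i, 0.99 * M < |ξ i| := by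
      intro i
      fin_cases i
      · exact lt_of_lt_of_le hmin (le_trans (min_le_left _ _) (min_le_left _ _))
      · exact lt_of_lt_of_le hmin (le_trans (min_le_left _ _) (min_le_right _ _))
      · exact lt_of_lt_of_le hmin (le_trans (min_le_right _ _) (min_le_left _ _))
      · exact lt_of_lt_of_le hmin (le_trans (min_le_right _ _) (min_le_right _ _))
    by_cases h0 : 0 < ξ 0 <;> by_cases h1 : 0 < ξ 1 <;>
      by_cases h2 : 0 < ξ 2 <;> by_cases h3 : 0 < ξ 3 <;>
      rw [Finset.card_filter, Fin.sum_univ_four] at hcard <;>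
      simp only [h0, h1, h2, h3, if_true, if_false, if_pos, if_neg, not_false_iff] at hcard
    · norm_num at hcard
    · norm_num at hcard
    · norm_num at hcard
    · exact case2split ξ M hM hb hlow 0 2 1 3 (by decide) (by decide) h0 h1 h2 h3
        (by rw [Fin.sum_univ_four]; ring)
    · norm_num at hcard
    · exact case2split ξ M hM hb hlow 0 1 2 3 (by decide) (by decide) h0 h2 h1 h3
        (by rw [Fin.sum_univ_four]; ring)
    · exact case2split ξ M hM hb hlow 0 1 3 2 (by decide) (by decide) h0 h3 h1 h2
        (by rw [Fin.sum_univ_four]; ring)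
    · norm_num at hcard
    · norm_num at hcard
    · exact case2split ξ M hM hb hlow 1 0 2 3 (by decide) (by decide) h1 h2 h0 h3
        (by rw [Fin.sum_univ_four]; ring)
    · exact case2split ξ M hM hb hlow 1 0 3 2 (by decide) (by decide) h1 h3 h0 h2
        (by rw [Fin.sum_univ_four]; ring)
    · norm_num at hcard
    · exact case2split ξ M hM hb hlow 2 0 3 1 (by decide) (by decide) h2 h3 h0 h1
        (by rw [Fin.sum_univ_four]; ring)
    · norm_num at hcard
    · norm_num at hcard
    · norm_num at hcard
end
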